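/- Exactly fifteen nonzero squarefree polynomials of degree < 8 on GF(2)^8 are invariant under the stabilizer G_S of the Segre variety: their zero sets are precisely the unions O_5 ∪ (⋃_{i∈α} O_i) over the 15 proper subsets α ⊊ {1,2,3,4}, where O_1,…,O_5 are the five G_S-orbits of points (of sizes 12, 54, 108, 54, 27 with O_5 = S). -/

import Mathlib

open Pointwise

set_option synthInstance.maxHeartbeats 1000000
set_option maxHeartbeats 1000000

/-- Index set for coordinates of `V_2 ⊗ V_2 ⊗ V_2` over `GF(2)`. -/
abbrev ι3 := Fin 2 × Fin 2 × Fin 2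

/-- `V_8 = V(2,2) ⊗ V(2,2) ⊗ V(2,2)`, realized in coordinates as `GF(2)^(2×2×2)`. -/
abbrev V8 := ι3 → ZMod 2

/-- The Segre variety `S_{1,1,1}(2)`: the nonzero decomposable tensors `u ⊗ v ⊗ w`. -/
def Segre : Set V8 :=
  {x | x ≠ 0 ∧ ∃ u v w : Fin 2 → ZMod 2, x = fun p => u p.1 * v p.2.1 * w p.2.2}

/-- The stabilizer of the Segre variety in `GL(8,2)`. -/
def SegreStab : Subgroup (V8 ≃ₗ[ZMod 2] V8) :=
  MulAction.stabilizer (V8 ≃ₗ[ZMod 2] V8) Segre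

/-- Evaluation of a squarefree (multilinear) polynomial given by its coefficients. -/
def mEval (c : Finset ι3 → ZMod 2) (x : V8) : ZMod 2 :=
  ∑ s : Finset ι3, c s * ∏ i ∈ s, x i

/-- Degree of a squarefree polynomial given by its coefficients. -/
def mDeg (c : Finset ι3 → ZMod 2) : ℕ :=
  (Finset.univ.filter fun s : Finset ι3 => c s ≠ 0).sup Finset.card

/-- A squarefree polynomial (without constant term) which is nonzero, of degree `< 8`,
and invariant under the stabilizer of the Segre variety. -/
def IsInvPoly (c : Finset ι3 → ZMod 2) : Prop :=
  c ∅ = 0 ∧ c ≠ 0 ∧ mDeg c < 8 ∧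
    ∀ A : V8 ≃ₗ[ZMod 2] V8, A ∈ SegreStab → ∀ x, mEval c (A x) = mEval c x

namespace Stmt19Aux

lemma zmod2_cases : ∀ z : ZMod 2, z = 0 ∨ z = 1 := by decide

def chi (t : Finset ι3) : V8 := fun i => if i ∈ t then 1 else 0

def supp (x : V8) : Finset ι3 := Finset.univ.filter (fun i => x i ≠ 0)

lemma chi_supp (x : V8) : chi (supp x) = x := by
  funext i
  rcases zmod2_cases (x i) with h | h <;> simp [chi, supp, h]

lemma supp_chi (t : Finset ι3) : supp (chi t) = t := by
  ext i
  by_cases h : i ∈ t <;> simp [supp, chi, h]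

lemma chi_bij : Function.Bijective chi :=
  Function.bijective_iff_has_inverse.2 ⟨supp, supp_chi, chi_supp⟩

lemma prod_supp (x : V8) (s : Finset ι3) :
    (∏ i ∈ s, x i) = if s ⊆ supp x then 1 else 0 := by
  by_cases h : s ⊆ supp x
  · rw [if_pos h]
    apply Finset.prod_eq_one
    intro i hi
    have := h hi
    simp only [supp, Finset.mem_filter] at this
    rcases zmod2_cases (x i) with h0 | h1
    · exact absurd h0 this.2
    · exact h1
  · rw [if_neg h]
    obtain ⟨i, hi, hni⟩ := Finset.not_subset.1 h
    apply Finset.prod_eq_zero hi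
    simp only [supp, Finset.mem_filter, Finset.mem_univ, true_and, not_not] at hni
    exact hni

lemma mEval_eq (c : Finset ι3 → ZMod 2) (x : V8) :
    mEval c x = ∑ s ∈ (supp x).powerset, c s := by
  unfold mEval
  have key : ∀ s : Finset ι3, c s * ∏ i ∈ s, x i = if s ⊆ supp x then c s else 0 := by
    intro s
    rw [prod_supp]
    split <;> simp
  rw [Finset.sum_congr rfl (fun s _ => key s), ← Finset.sum_filter]
  congr 1
  ext s
  simp [Finset.mem_powerset]

def coeffOf (F : V8 → ZMod 2) : Finset ι3 → ZMod 2 :=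
  fun s => ∑ t ∈ s.powerset, F (chi t)

lemma core (g : Finset ι3 → ZMod 2) (s : Finset ι3) :
    ∑ t ∈ s.powerset, ∑ u ∈ t.powerset, g u = g s := by
  have h1 : ∀ t ∈ s.powerset, ∑ u ∈ t.powerset, g u
      = ∑ u ∈ s.powerset, if u ⊆ t then g u else 0 := by
    intro t ht
    rw [Finset.mem_powerset] at ht
    rw [← Finset.sum_filter]
    congr 1
    ext u
    simp only [Finset.mem_powerset, Finset.mem_filter]
    exact ⟨fun h => ⟨h.trans ht, h⟩, fun h => h.2⟩
  rw [Finset.sum_congr rfl h1, Finset.sum_comm]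
  have h2 : ∀ u ∈ s.powerset, ∑ t ∈ s.powerset, (if u ⊆ t then g u else 0)
      = (Finset.Icc u s).card • g u := by
    intro u _
    rw [← Finset.sum_filter, Finset.sum_const]
    congr 1
    congr 1
    ext t
    simp only [Finset.mem_filter, Finset.mem_powerset, Finset.mem_Icc, ← Finset.le_iff_subset]
    exact and_comm
  rw [Finset.sum_congr rfl h2]
  rw [Finset.sum_eq_single s]
  · rw [Finset.card_Icc_finset (le_refl s), Nat.sub_self, pow_zero, one_smul]
  · intro u hu hus
    rw [Finset.mem_powerset] at hu
    rw [Finset.card_Icc_finset hu]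
    have hlt : u.card < s.card := Finset.card_lt_card (lt_of_le_of_ne hu hus)
    have heq : (2 ^ (s.card - u.card) : ℕ) • g u
        = ((2:ZMod 2) ^ (s.card - u.card)) * g u := by
      rw [nsmul_eq_mul, Nat.cast_pow, Nat.cast_ofNat]
    rw [heq]
    have h2z : (2 : ZMod 2) = 0 := by decide
    rw [h2z, zero_pow (by omega), zero_mul]
  · intro h
    exact absurd (Finset.mem_powerset.2 (le_refl s)) h

lemma eval_coeff (F : V8 → ZMod 2) (x : V8) : mEval (coeffOf F) x = F x := by
  rw [mEval_eq]
  unfold coeffOf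
  rw [core (fun t => F (chi t)) (supp x), chi_supp]

lemma coeff_eval (c : Finset ι3 → ZMod 2) (s : Finset ι3) :
    coeffOf (mEval c) s = c s := by
  unfold coeffOf
  have h : ∀ t ∈ s.powerset, mEval c (chi t) = ∑ u ∈ t.powerset, c u := by
    intro t _
    rw [mEval_eq, supp_chi]
  rw [Finset.sum_congr rfl h, core]

open scoped Classical in
/-- The function on `V8` which is `b i` on `O i` and `0` elsewhere. -/
noncomputable def Fb (O : Fin 5 → Set V8) (b : Fin 5 → ZMod 2) : V8 → ZMod 2 :=
  fun x => ∑ i : Fin 5, if x ∈ O i then b i else 0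

/-- Values on orbits determined by a proper subset `α` of `{0,1,2,3}`. -/
def bOf (α : Finset (Fin 4)) : Fin 5 → ZMod 2 :=
  fun i => Fin.lastCases 0 (fun j => if j ∈ α then 0 else 1) i

lemma bOf_last (α : Finset (Fin 4)) : bOf α (Fin.last 4) = 0 := by
  simp only [bOf, Fin.lastCases_last]

lemma bOf_castSucc (α : Finset (Fin 4)) (j : Fin 4) :
    bOf α j.castSucc = if j ∈ α then 0 else 1 := by
  simp [bOf]

/-- The invariant polynomial corresponding to `α`. -/
noncomputable def Phi (O : Fin 5 → Set V8) (α : Finset (Fin 4)) : Finset ι3 → ZMod 2 :=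
  coeffOf (Fb O (bOf α))

end Stmt19Aux

open Stmt19Aux in
/-- Given the five point-orbits `O 0, …, O 4` of the stabilizer `G_S` (of sizes
12, 54, 108, 54, 27, with `O 4 = S`), there are exactly fifteen nonzero squarefree
invariant polynomials of degree `< 8`, and their zero sets among nonzero vectors are
precisely the unions `O 4 ∪ ⋃_{i ∈ α} O i` over the proper subsets `α ⊊ {0,1,2,3}`. -/
theorem stmt19 (O : Fin 5 → Set V8)
    (horb : ∀ i, ∃ v : V8, O i = MulAction.orbit SegreStab v)
    (hdisj : ∀ i j, i ≠ j → Disjoint (O i) (O j))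
    (hunion : (⋃ i, O i) = {x : V8 | x ≠ 0})
    (hcard : (O 0).ncard = 12 ∧ (O 1).ncard = 54 ∧ (O 2).ncard = 108 ∧
      (O 3).ncard = 54 ∧ (O 4).ncard = 27)
    (hS : O 4 = Segre) :
    {c : Finset ι3 → ZMod 2 | IsInvPoly c}.ncard = 15 ∧
    (∀ c : Finset ι3 → ZMod 2, IsInvPoly c →
      ∃ α : Finset (Fin 4), α ≠ Finset.univ ∧
        {x : V8 | x ≠ 0 ∧ mEval c x = 0} = O 4 ∪ ⋃ i ∈ α, O i.castSucc) ∧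
    (∀ α : Finset (Fin 4), α ≠ Finset.univ →
      ∃ c : Finset ι3 → ZMod 2, IsInvPoly c ∧
        {x : V8 | x ≠ 0 ∧ mEval c x = 0} = O 4 ∪ ⋃ i ∈ α, O i.castSucc) := by
  classical
  obtain ⟨hc0, hc1, hc2, hc3, hc4⟩ := hcard
  choose v hv using horb
  have hvmem : ∀ i, v i ∈ O i := fun i => (hv i) ▸ MulAction.mem_orbit_self (v i)
  have hOsub : ∀ i, O i ⊆ {x : V8 | x ≠ 0} := fun i => hunion ▸ Set.subset_iUnion O i
  have hO0 : ∀ i, (0:V8) ∉ O i := fun i h => (hOsub i h) rfl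
  have h4last : (4 : Fin 5) = Fin.last 4 := rfl
  have hcard8 : (Finset.univ : Finset ι3).card = 8 := by decide
  -- orbit invariance under the stabilizer
  have horbinv : ∀ (A : V8 ≃ₗ[ZMod 2] V8), A ∈ SegreStab → ∀ i (x : V8),
      x ∈ O i → A x ∈ O i := by
    intro A hA i x hx
    rw [hv i] at hx ⊢
    obtain ⟨B, rfl⟩ := hx
    refine ⟨(⟨A, hA⟩ : SegreStab) * B, ?_⟩
    show ((⟨A, hA⟩ : SegreStab) * B) • v i = A (B • v i)
    rw [mul_smul]
    rfl
  -- basic properties of Fb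
  have hFbmem : ∀ (b : Fin 5 → ZMod 2) i (x : V8), x ∈ O i → Fb O b x = b i := by
    intro b i x hx
    unfold Fb
    rw [Finset.sum_eq_single i]
    · rw [if_pos hx]
    · intro j _ hj
      rw [if_neg]
      exact fun hxj => (hdisj j i hj).le_bot ⟨hxj, hx⟩
    · intro h
      exact absurd (Finset.mem_univ i) h
  have hFb0 : ∀ b, Fb O b 0 = 0 := by
    intro b
    unfold Fb
    exact Finset.sum_eq_zero (fun i _ => if_neg (hO0 i))
  have hFbzero : ∀ b : Fin 5 → ZMod 2, (∀ i, b i = 0) → ∀ x, Fb O b x = 0 := by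
    intro b hb x
    unfold Fb
    apply Finset.sum_eq_zero
    intro i _
    rw [hb i]
    split <;> rfl
  have hncard : ∀ i, (Finset.univ.filter (· ∈ O i)).card = (O i).ncard := by
    intro i
    rw [Set.ncard_eq_toFinset_card']
    congr 1
    ext x
    simp
  have key_sum : ∀ b : Fin 5 → ZMod 2, ∑ x : V8, Fb O b x = b 4 := by
    intro b
    unfold Fb
    rw [Finset.sum_comm]
    have hone : ∀ i : Fin 5, ∑ x : V8, (if x ∈ O i then b i else 0)
        = (O i).ncard • b i := by
      intro i
      rw [← Finset.sum_filter, Finset.sum_const, hncard]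
    rw [Finset.sum_congr rfl (fun i _ => hone i), Fin.sum_univ_five,
      hc0, hc1, hc2, hc3, hc4]
    have hsm : ∀ (n : ℕ) (z : ZMod 2), n • z = (n : ZMod 2) * z :=
      fun n z => nsmul_eq_mul n z
    rw [hsm, hsm, hsm, hsm, hsm]
    have e12 : ((12:ℕ) : ZMod 2) = 0 := by decide
    have e54 : ((54:ℕ) : ZMod 2) = 0 := by decide
    have e108 : ((108:ℕ) : ZMod 2) = 0 := by decide
    have e27 : ((27:ℕ) : ZMod 2) = 1 := by decide
    rw [e12, e54, e108, e27]
    ring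
  have hcoeff_univ : ∀ b : Fin 5 → ZMod 2, coeffOf (Fb O b) Finset.univ = b 4 := by
    intro b
    unfold coeffOf
    rw [Finset.powerset_univ,
      show (∑ t : Finset ι3, Fb O b (chi t)) = ∑ x : V8, Fb O b x from
        Fintype.sum_bijective chi chi_bij _ _ (fun t => rfl),
      key_sum]
  have hFbinv : ∀ (b : Fin 5 → ZMod 2) (A : V8 ≃ₗ[ZMod 2] V8), A ∈ SegreStab →
      ∀ x, Fb O b (A x) = Fb O b x := by
    intro b A hA x
    unfold Fb
    apply Finset.sum_congr rfl
    intro i _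
    by_cases hx : x ∈ O i
    · rw [if_pos hx, if_pos (horbinv A hA i x hx)]
    · rw [if_neg hx, if_neg]
      intro h
      apply hx
      have := horbinv A⁻¹ (inv_mem hA) i (A x) h
      rwa [show (A⁻¹ : V8 ≃ₗ[ZMod 2] V8) (A x) = x from A.symm_apply_apply x] at this
  have hPhi_eval : ∀ (α : Finset (Fin 4)) x, mEval (Phi O α) x = Fb O (bOf α) x :=
    fun α x => eval_coeff _ x
  have hbOf4 : ∀ α, bOf α (4 : Fin 5) = 0 := fun α => bOf_last α
  -- zero-set description
  have hzero : ∀ b : Fin 5 → ZMod 2, b 4 = 0 → ∀ α : Finset (Fin 4),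
      (∀ j, j ∈ α ↔ b j.castSucc = 0) →
      {x : V8 | x ≠ 0 ∧ Fb O b x = 0} = O 4 ∪ ⋃ i ∈ α, O i.castSucc := by
    intro b hb4 α hα
    ext x
    simp only [Set.mem_setOf_eq, Set.mem_union]
    constructor
    · rintro ⟨hx0, hx⟩
      have hxU : x ∈ ⋃ i, O i := by rw [hunion]; exact hx0
      obtain ⟨i, hi⟩ := Set.mem_iUnion.1 hxU
      have hbix : b i = 0 := by rw [← hFbmem b i x hi]; exact hx
      rcases Fin.eq_castSucc_or_eq_last i with ⟨j, rfl⟩ | rfl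
      · exact Or.inr (Set.mem_biUnion ((hα j).2 hbix) hi)
      · exact Or.inl (h4last ▸ hi)
    · rintro (hx | hx)
      · refine ⟨fun h => hO0 4 (h ▸ hx), ?_⟩
        rw [hFbmem b 4 x hx, hb4]
      · obtain ⟨j, hj, hxm⟩ := Set.mem_iUnion₂.1 hx
        refine ⟨fun h => hO0 _ (h ▸ hxm), ?_⟩
        rw [hFbmem b _ x hxm]
        exact (hα j).1 hj
  -- Phi O α is an invariant polynomial for proper α
  have hPhiInv : ∀ α : Finset (Fin 4), α ≠ Finset.univ → IsInvPoly (Phi O α) := by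
    intro α hα
    obtain ⟨j, hj⟩ : ∃ j, j ∉ α := by
      by_contra h
      push_neg at h
      exact hα (Finset.eq_univ_iff_forall.2 h)
    refine ⟨?_, ?_, ?_, ?_⟩
    · show coeffOf (Fb O (bOf α)) ∅ = 0
      unfold coeffOf
      rw [Finset.powerset_empty, Finset.sum_singleton,
        show chi ∅ = 0 from by funext i; simp [chi], hFb0]
    · intro h
      have hval : Fb O (bOf α) (v j.castSucc) = 0 := by
        rw [← hPhi_eval α, h]
        unfold mEval
        simp
      rw [hFbmem _ _ _ (hvmem j.castSucc), bOf_castSucc, if_neg hj] at hval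
      exact one_ne_zero hval
    · have huniv : Phi O α Finset.univ = 0 := by
        show coeffOf (Fb O (bOf α)) Finset.univ = 0
        rw [hcoeff_univ, hbOf4]
      unfold mDeg
      rw [Finset.sup_lt_iff (show (⊥:ℕ) < 8 by norm_num)]
      intro s hs
      rw [Finset.mem_filter] at hs
      have hsne : s ≠ Finset.univ := fun h => hs.2 (h ▸ huniv)
      have hlt : s.card < (Finset.univ : Finset ι3).card :=
        Finset.card_lt_card (lt_of_le_of_ne (Finset.subset_univ s) hsne)
      omega
    · intro A hA x
      rw [hPhi_eval, hPhi_eval, hFbinv _ A hA]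
  -- main analysis of an invariant polynomial
  have hmain : ∀ c, IsInvPoly c → ∃ α : Finset (Fin 4), α ≠ Finset.univ ∧ c = Phi O α ∧
      {x : V8 | x ≠ 0 ∧ mEval c x = 0} = O 4 ∪ ⋃ i ∈ α, O i.castSucc := by
    intro c hc
    obtain ⟨hcE, hcne, hcdeg, hcinv⟩ := hc
    set b : Fin 5 → ZMod 2 := fun i => mEval c (v i) with hbdef
    have hFeq : ∀ x, mEval c x = Fb O b x := by
      intro x
      by_cases hx : x = 0
      · subst hx
        rw [hFb0, mEval_eq, show supp (0:V8) = ∅ from by ext i; simp [supp],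
          Finset.powerset_empty, Finset.sum_singleton, hcE]
      · have hxU : x ∈ ⋃ i, O i := by rw [hunion]; exact hx
        obtain ⟨i, hi⟩ := Set.mem_iUnion.1 hxU
        rw [hFbmem b i x hi]
        have hx' : x ∈ MulAction.orbit SegreStab (v i) := (hv i) ▸ hi
        obtain ⟨B, rfl⟩ := hx'
        exact hcinv (B : V8 ≃ₗ[ZMod 2] V8) B.2 (v i)
    have hceq : c = coeffOf (Fb O b) := by
      funext s
      rw [← coeff_eval c s]
      unfold coeffOf
      exact Finset.sum_congr rfl (fun t _ => by rw [hFeq])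
    have hb4 : b 4 = 0 := by
      have hcu : c Finset.univ = 0 := by
        by_contra h
        have hm : Finset.univ ∈ Finset.univ.filter (fun s : Finset ι3 => c s ≠ 0) :=
          Finset.mem_filter.2 ⟨Finset.mem_univ _, h⟩
        have h8 := Finset.le_sup (f := Finset.card) hm
        rw [hcard8] at h8
        exact absurd hcdeg (by unfold mDeg; omega)
      rw [hceq, hcoeff_univ] at hcu
      exact hcu
    set α : Finset (Fin 4) := Finset.univ.filter (fun j : Fin 4 => b j.castSucc = 0)
      with hαdef
    have hαmem : ∀ j, j ∈ α ↔ b j.castSucc = 0 := by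
      intro j
      simp [hαdef]
    have hbOfb : bOf α = b := by
      funext i
      refine Fin.lastCases ?_ ?_ i
      · rw [bOf_last]
        exact hb4.symm
      · intro j
        rw [bOf_castSucc]
        rcases zmod2_cases (b j.castSucc) with h0 | h1
        · rw [if_pos ((hαmem j).2 h0), h0]
        · have hjn : j ∉ α := fun hm => by
            rw [(hαmem j).1 hm] at h1
            exact zero_ne_one h1
          rw [if_neg hjn, h1]
    have hαne : α ≠ Finset.univ := by
      intro h
      apply hcne
      have hball : ∀ i, b i = 0 := by
        intro i
        refine Fin.lastCases ?_ ?_ i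
        · exact hb4
        · intro j
          exact (hαmem j).1 (h ▸ Finset.mem_univ j)
      rw [hceq]
      funext s
      unfold coeffOf
      exact Finset.sum_eq_zero (fun t _ => hFbzero b hball (chi t))
    refine ⟨α, hαne, ?_, ?_⟩
    · rw [hceq]
      unfold Phi
      rw [hbOfb]
    · rw [← hzero b hb4 α hαmem]
      ext x
      simp only [Set.mem_setOf_eq]
      rw [hFeq]
  -- injectivity of Phi
  have hPhiInj : Function.Injective (Phi O) := by
    intro α α' h
    have hF : ∀ x, Fb O (bOf α) x = Fb O (bOf α') x := by
      intro x
      rw [← hPhi_eval α x, ← hPhi_eval α' x, h]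
    ext j
    have h1 := hF (v j.castSucc)
    rw [hFbmem _ _ _ (hvmem j.castSucc), hFbmem _ _ _ (hvmem j.castSucc),
      bOf_castSucc, bOf_castSucc] at h1
    constructor
    · intro hj
      by_contra hj'
      rw [if_pos hj, if_neg hj'] at h1
      exact one_ne_zero h1.symm
    · intro hj'
      by_contra hj
      rw [if_neg hj, if_pos hj'] at h1
      exact one_ne_zero h1
  have hset : {c : Finset ι3 → ZMod 2 | IsInvPoly c}
      = Phi O '' {α : Finset (Fin 4) | α ≠ Finset.univ} := by
    ext c
    simp only [Set.mem_setOf_eq, Set.mem_image]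
    constructor
    · intro hc
      obtain ⟨α, hα, hceq, _⟩ := hmain c hc
      exact ⟨α, hα, hceq.symm⟩
    · rintro ⟨α, hα, rfl⟩
      exact hPhiInv α hα
  refine ⟨?_, ?_, ?_⟩
  · rw [hset, Set.ncard_image_of_injective _ hPhiInj,
      show {α : Finset (Fin 4) | α ≠ Finset.univ}
        = ↑(Finset.univ.filter (fun α : Finset (Fin 4) => α ≠ Finset.univ)) from
        by ext α; simp,
      Set.ncard_coe_finset]
    decide
  · intro c hc
    obtain ⟨α, hα, _, hzs⟩ := hmain c hc
    exact ⟨α, hα, hzs⟩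
  · intro α hα
    refine ⟨Phi O α, hPhiInv α hα, ?_⟩
    have hαm : ∀ j, j ∈ α ↔ bOf α j.castSucc = 0 := by
      intro j
      rw [bOf_castSucc]
      by_cases hj : j ∈ α
      · simp [hj]
      · simp [hj]
    rw [← hzero (bOf α) (hbOf4 α) α hαm]
    ext x
    simp only [Set.mem_setOf_eq]
    rw [hPhi_eval]
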